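/- Let n ∈ ℕ, 0 ≤ k ≤ n, and 0 < r ≤ n/2, and set p = r/n. Let X ~ Bin(k, p) and Y ~ Bin(n−k, p) be independent and Z := Y − X, so that E(Z) = (n−2k)·r/n. Then for all Δ > 0: Pr(Z ≤ (n−2k)r/n − Δ) ≤ exp(−Δ²/(2(1−p)(r + Δ/3))) and Pr(Z ≥ (n−2k)r/n + Δ) ≤ exp(−Δ²/(2(1−p)(r + Δ/3))). -/

import Mathlib

open scoped BigOperators

namespace BinomialEstimates

/-- `binP m p a = Pr(Bin(m,p) = a)`, the binomial probability mass function. -/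
noncomputable def binP (m : ℕ) (p : ℝ) (a : ℕ) : ℝ :=
  (m.choose a : ℝ) * p ^ a * (1 - p) ^ (m - a)

/-- `Pr(Y − X ∈ E)` for independent `X ~ Bin(k, p)` and `Y ~ Bin(n−k, p)`;
`Z = Y − X` is the fitness-distance increase under standard bit mutation with
probability `p` of a parent with `k` one-bits. -/
noncomputable def pZ (n k : ℕ) (p : ℝ) (E : ℝ → Prop) [DecidablePred E] : ℝ :=
  ∑ a ∈ Finset.range (k + 1), ∑ b ∈ Finset.range (n - k + 1),
    if E ((b : ℝ) - (a : ℝ)) then binP k p a * binP (n - k) p b else 0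

lemma nonneg_of_hasDerivAt {f f' : ℝ → ℝ} (hd : ∀ x, HasDerivAt f (f' x) x)
    (h0 : f 0 = 0) (hf' : ∀ x, 0 ≤ x → 0 ≤ f' x) {x : ℝ} (hx : 0 ≤ x) : 0 ≤ f x := by
  have hmono : MonotoneOn f (Set.Ici (0:ℝ)) := by
    refine monotoneOn_of_deriv_nonneg (convex_Ici 0) ?_ ?_ ?_
    · exact fun y _ => (hd y).continuousAt.continuousWithinAt
    · exact fun y _ => (hd y).differentiableAt.differentiableWithinAt
    · intro y hy
      rw [interior_Ici] at hy
      rw [(hd y).deriv]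
      exact hf' y (le_of_lt hy)
  have h := hmono Set.self_mem_Ici (Set.mem_Ici.2 hx) hx
  rwa [h0] at h

/-- (exp x - 1 - x)(3 - x) ≤ 3x²/2 for x ≥ 0. -/
lemma exp_quad_bound {x : ℝ} (hx : 0 ≤ x) :
    (Real.exp x - 1 - x) * (3 - x) ≤ 3 * x ^ 2 / 2 := by
  have h2 : ∀ y : ℝ, 0 ≤ y → 0 ≤ 1 + (y - 1) * Real.exp y := by
    intro y hy
    refine nonneg_of_hasDerivAt (f := fun z => 1 + (z - 1) * Real.exp z)
      (f' := fun z => z * Real.exp z) (fun z => ?_) (by simp) (fun z hz => mul_nonneg hz (Real.exp_pos z).le) hy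
    have h := ((hasDerivAt_id' z).sub_const 1).mul (Real.hasDerivAt_exp z) |>.const_add 1
    convert h using 1
    · rfl
    · rfl
    · funext w; simp only [Pi.add_apply, Pi.sub_apply, Pi.mul_apply]
    · ring
  have h1 : ∀ y : ℝ, 0 ≤ y → 0 ≤ y + 2 + (y - 2) * Real.exp y := by
    intro y hy
    refine nonneg_of_hasDerivAt (f := fun z => z + 2 + (z - 2) * Real.exp z)
      (f' := fun z => 1 + (z - 1) * Real.exp z) (fun z => ?_) (by simp) h2 hy
    have h := ((hasDerivAt_id' z).add_const 2).add
      (((hasDerivAt_id' z).sub_const 2).mul (Real.hasDerivAt_exp z))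
    convert h using 1
    · rfl
    · rfl
    · funext w; simp only [Pi.add_apply, Pi.sub_apply, Pi.mul_apply]
    · ring
  have h0 : 0 ≤ 3 * x ^ 2 / 2 - (Real.exp x - 1 - x) * (3 - x) := by
    refine nonneg_of_hasDerivAt (f := fun y => 3 * y ^ 2 / 2 - (Real.exp y - 1 - y) * (3 - y))
      (f' := fun z => z + 2 + (z - 2) * Real.exp z) (fun z => ?_) (by simp) h1 hx
    have h := (((hasDerivAt_pow 2 z).const_mul 3).div_const 2).sub
      ((((Real.hasDerivAt_exp z).sub_const 1).sub (hasDerivAt_id' z)).mul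
        ((hasDerivAt_const z 3).sub (hasDerivAt_id' z)))
    convert h using 1
    · rfl
    · rfl
    · funext w; simp only [Pi.add_apply, Pi.sub_apply, Pi.mul_apply]
    · simp only [Pi.sub_apply]; ring
  linarith

/-- A': (1-p)·e^{-tp} + p·e^{t(1-p)} ≤ 1 + (p/(1-p))·(e^{t(1-p)} - 1 - t(1-p)) -/
lemma factor_up {p : ℝ} (hp : 0 ≤ p) (hp2 : p ≤ 1/2) {t : ℝ} (ht : 0 ≤ t) :
    (1 - p) * Real.exp (-(t * p)) + p * Real.exp (t * (1 - p)) ≤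
      1 + p / (1 - p) * (Real.exp (t * (1 - p)) - 1 - t * (1 - p)) := by
  have hq : 0 < 1 - p := by linarith
  have key : 0 ≤ 1 + p / (1 - p) * (Real.exp (t * (1 - p)) - 1 - t * (1 - p))
      - ((1 - p) * Real.exp (-(t * p)) + p * Real.exp (t * (1 - p))) := by
    refine nonneg_of_hasDerivAt
      (f := fun s => 1 + p / (1 - p) * (Real.exp (s * (1 - p)) - 1 - s * (1 - p))
        - ((1 - p) * Real.exp (-(s * p)) + p * Real.exp (s * (1 - p))))
      (f' := fun s => p / (1 - p) * (Real.exp (s * (1 - p)) * (1 - p) - (1 - p))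
        - ((1 - p) * (Real.exp (-(s * p)) * (-p)) + p * (Real.exp (s * (1 - p)) * (1 - p))))
      (fun s => ?_) (by simp) ?_ ht
    · have hEq : HasDerivAt (fun s : ℝ => Real.exp (s * (1 - p))) (Real.exp (s * (1 - p)) * (1 - p)) s := by
        have := ((hasDerivAt_id' s).mul_const (1 - p)).exp
        simpa using this
      have hEp : HasDerivAt (fun s : ℝ => Real.exp (-(s * p))) (Real.exp (-(s * p)) * (-p)) s := by
        have := (((hasDerivAt_id' s).mul_const p).neg).exp
        simpa using this
      have h := (((hEq.sub_const 1).sub ((hasDerivAt_id' s).mul_const (1 - p))).const_mul (p/(1 - p))).const_add 1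
        |>.sub ((hEp.const_mul (1 - p)).add (hEq.const_mul p))
      convert h using 1
      · rfl
      · rfl
      · funext w; simp only [Pi.add_apply, Pi.sub_apply, Pi.mul_apply]
      · ring
    · intro s _hsx
      have e1 : p / (1 - p) * (Real.exp (s * (1 - p)) * (1 - p) - (1 - p)) = p * (Real.exp (s * (1 - p)) - 1) := by
        field_simp
      rw [e1]
      have h1 := Real.add_one_le_exp (s * (1 - p))
      have h2 := Real.add_one_le_exp (-(s * p))
      nlinarith [mul_nonneg (mul_nonneg hp hp) (by linarith : (0:ℝ) ≤ Real.exp (s*(1 - p)) - 1 - s*(1 - p)),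
        mul_nonneg (mul_nonneg hp hq.le) (by linarith : (0:ℝ) ≤ Real.exp (-(s*p)) - 1 + s*p)]
  linarith

/-- B': (1-p)·e^{tp} + p·e^{-t(1-p)} ≤ 1 + (p/(1-p))·(e^{t(1-p)} - 1 - t(1-p)) -/
lemma factor_down {p : ℝ} (hp : 0 ≤ p) (hp2 : p ≤ 1/2) {t : ℝ} (ht : 0 ≤ t) :
    (1 - p) * Real.exp (t * p) + p * Real.exp (-(t * (1 - p))) ≤
      1 + p / (1 - p) * (Real.exp (t * (1 - p)) - 1 - t * (1 - p)) := by
  have hq : 0 < 1 - p := by linarith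
  -- u(s) = e^{sq} - 1 - (1 - p) e^{sp} + (1 - p) e^{-sq} ≥ 0 for s ≥ 0
  have hu : ∀ s : ℝ, 0 ≤ s →
      0 ≤ Real.exp (s * (1 - p)) - 1 - (1 - p) * Real.exp (s * p) + (1 - p) * Real.exp (-(s * (1 - p))) := by
    intro s hs
    refine nonneg_of_hasDerivAt
      (f := fun s => Real.exp (s * (1 - p)) - 1 - (1 - p) * Real.exp (s * p) + (1 - p) * Real.exp (-(s * (1 - p))))
      (f' := fun s => Real.exp (s * (1 - p)) * (1 - p) - (1 - p) * (Real.exp (s * p) * p) + (1 - p) * (Real.exp (-(s * (1 - p))) * (-(1 - p))))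
      (fun s => ?_) (by simp) ?_ hs
    · have hEq : HasDerivAt (fun s : ℝ => Real.exp (s * (1 - p))) (Real.exp (s * (1 - p)) * (1 - p)) s := by
        simpa using ((hasDerivAt_id' s).mul_const (1 - p)).exp
      have hEp : HasDerivAt (fun s : ℝ => Real.exp (s * p)) (Real.exp (s * p) * p) s := by
        simpa using ((hasDerivAt_id' s).mul_const p).exp
      have hEmq : HasDerivAt (fun s : ℝ => Real.exp (-(s * (1 - p)))) (Real.exp (-(s * (1 - p))) * (-(1 - p))) s := by
        simpa using (((hasDerivAt_id' s).mul_const (1 - p)).neg).exp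
      have h := ((hEq.sub_const 1).sub (hEp.const_mul (1 - p))).add (hEmq.const_mul (1 - p))
      convert h using 1
      · rfl
      · rfl
      · funext w; simp only [Pi.add_apply, Pi.sub_apply, Pi.mul_apply]
    · intro s hs'
      have h1 : Real.exp (s * p) ≤ Real.exp (s * (1 - p)) :=
        Real.exp_le_exp.2 (by nlinarith)
      have h2 : Real.exp (-(s * (1 - p))) ≤ Real.exp (s * (1 - p)) :=
        Real.exp_le_exp.2 (by nlinarith)
      nlinarith [mul_nonneg (mul_nonneg hq.le hp) (by linarith : (0:ℝ) ≤ Real.exp (s*(1 - p)) - Real.exp (s*p)),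
        mul_nonneg (mul_nonneg hq.le hq.le) (by linarith : (0:ℝ) ≤ Real.exp (s*(1 - p)) - Real.exp (-(s*(1 - p))))]
  have key : 0 ≤ 1 + p / (1 - p) * (Real.exp (t * (1 - p)) - 1 - t * (1 - p))
      - ((1 - p) * Real.exp (t * p) + p * Real.exp (-(t * (1 - p)))) := by
    refine nonneg_of_hasDerivAt
      (f := fun s => 1 + p / (1 - p) * (Real.exp (s * (1 - p)) - 1 - s * (1 - p))
        - ((1 - p) * Real.exp (s * p) + p * Real.exp (-(s * (1 - p)))))
      (f' := fun s => p / (1 - p) * (Real.exp (s * (1 - p)) * (1 - p) - (1 - p))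
        - ((1 - p) * (Real.exp (s * p) * p) + p * (Real.exp (-(s * (1 - p))) * (-(1 - p)))))
      (fun s => ?_) (by simp) ?_ ht
    · have hEq : HasDerivAt (fun s : ℝ => Real.exp (s * (1 - p))) (Real.exp (s * (1 - p)) * (1 - p)) s := by
        simpa using ((hasDerivAt_id' s).mul_const (1 - p)).exp
      have hEp : HasDerivAt (fun s : ℝ => Real.exp (s * p)) (Real.exp (s * p) * p) s := by
        simpa using ((hasDerivAt_id' s).mul_const p).exp
      have hEmq : HasDerivAt (fun s : ℝ => Real.exp (-(s * (1 - p)))) (Real.exp (-(s * (1 - p))) * (-(1 - p))) s := by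
        simpa using (((hasDerivAt_id' s).mul_const (1 - p)).neg).exp
      have h := (((hEq.sub_const 1).sub ((hasDerivAt_id' s).mul_const (1 - p))).const_mul (p/(1 - p))).const_add 1
        |>.sub ((hEp.const_mul (1 - p)).add (hEmq.const_mul p))
      convert h using 1
      · rfl
      · rfl
      · funext w; simp only [Pi.add_apply, Pi.sub_apply, Pi.mul_apply]
      · ring
    · intro s _hsx
      have e1 : p / (1 - p) * (Real.exp (s * (1 - p)) * (1 - p) - (1 - p)) = p * (Real.exp (s * (1 - p)) - 1) := by
        field_simp
      rw [e1]
      have := hu s _hsx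
      nlinarith [hp, hq.le]
  linarith

lemma binP_nonneg {m : ℕ} {p : ℝ} (hp0 : 0 ≤ p) (hp1 : p ≤ 1) (a : ℕ) : 0 ≤ binP m p a :=
  mul_nonneg (mul_nonneg (Nat.cast_nonneg _) (pow_nonneg hp0 _))
    (pow_nonneg (by linarith) _)

lemma sum_binP_mul (m : ℕ) (p s : ℝ) :
    ∑ a ∈ Finset.range (m + 1), binP m p a * s ^ a = (p * s + (1 - p)) ^ m := by
  rw [add_pow]
  refine Finset.sum_congr rfl fun a _ => ?_
  unfold binP
  rw [mul_pow]
  ring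

/-- Chernoff–Markov bound for the upper tail. -/
lemma pZ_ge_le (n k : ℕ) (p t c : ℝ) (hp0 : 0 ≤ p) (hp1 : p ≤ 1) (ht : 0 ≤ t) :
    pZ n k p (fun z => c ≤ z) ≤
      Real.exp (-(t * c)) *
        ((p * Real.exp (-t) + (1 - p)) ^ k * (p * Real.exp t + (1 - p)) ^ (n - k)) := by
  have hterm : ∀ a b : ℕ,
      (if c ≤ (b : ℝ) - (a : ℝ) then binP k p a * binP (n - k) p b else 0) ≤
      Real.exp (-(t * c)) *
        ((binP k p a * Real.exp (-t) ^ a) * (binP (n - k) p b * Real.exp t ^ b)) := by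
    intro a b
    have hBB := mul_nonneg (binP_nonneg (m := k) hp0 hp1 a) (binP_nonneg (m := n - k) hp0 hp1 b)
    have hre : Real.exp (-(t * c)) *
        ((binP k p a * Real.exp (-t) ^ a) * (binP (n - k) p b * Real.exp t ^ b)) =
        (binP k p a * binP (n - k) p b) * Real.exp (t * ((b : ℝ) - (a : ℝ) - c)) := by
      rw [← Real.exp_nat_mul, ← Real.exp_nat_mul]
      have hmm : Real.exp (-(t * c)) * Real.exp ((a : ℝ) * -t) * Real.exp ((b : ℝ) * t) =
          Real.exp (t * ((b : ℝ) - (a : ℝ) - c)) := by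
        rw [← Real.exp_add, ← Real.exp_add]
        ring_nf
      rw [← hmm]
      ring
    rw [hre]
    split_ifs with h
    · nth_rewrite 1 [show binP k p a * binP (n - k) p b
        = (binP k p a * binP (n - k) p b) * 1 by ring]
      refine mul_le_mul_of_nonneg_left ?_ hBB
      exact Real.one_le_exp (mul_nonneg ht (by linarith))
    · exact mul_nonneg hBB (Real.exp_pos _).le
  calc pZ n k p (fun z => c ≤ z)
      ≤ ∑ a ∈ Finset.range (k + 1), ∑ b ∈ Finset.range (n - k + 1),
          Real.exp (-(t * c)) *
            ((binP k p a * Real.exp (-t) ^ a) * (binP (n - k) p b * Real.exp t ^ b)) := by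
        unfold pZ
        exact Finset.sum_le_sum fun a _ => Finset.sum_le_sum fun b _ => hterm a b
    _ = Real.exp (-(t * c)) *
        ((p * Real.exp (-t) + (1 - p)) ^ k * (p * Real.exp t + (1 - p)) ^ (n - k)) := by
        rw [← sum_binP_mul k p (Real.exp (-t)), ← sum_binP_mul (n - k) p (Real.exp t)]
        rw [Finset.sum_mul_sum]
        rw [Finset.mul_sum]
        refine Finset.sum_congr rfl fun a _ => ?_
        rw [Finset.mul_sum]

/-- Chernoff–Markov bound for the lower tail. -/
lemma pZ_le_le (n k : ℕ) (p t c : ℝ) (hp0 : 0 ≤ p) (hp1 : p ≤ 1) (ht : 0 ≤ t) :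
    pZ n k p (fun z => z ≤ c) ≤
      Real.exp (t * c) *
        ((p * Real.exp t + (1 - p)) ^ k * (p * Real.exp (-t) + (1 - p)) ^ (n - k)) := by
  have hterm : ∀ a b : ℕ,
      (if (b : ℝ) - (a : ℝ) ≤ c then binP k p a * binP (n - k) p b else 0) ≤
      Real.exp (t * c) *
        ((binP k p a * Real.exp t ^ a) * (binP (n - k) p b * Real.exp (-t) ^ b)) := by
    intro a b
    have hBB := mul_nonneg (binP_nonneg (m := k) hp0 hp1 a) (binP_nonneg (m := n - k) hp0 hp1 b)
    have hre : Real.exp (t * c) *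
        ((binP k p a * Real.exp t ^ a) * (binP (n - k) p b * Real.exp (-t) ^ b)) =
        (binP k p a * binP (n - k) p b) * Real.exp (t * (c - ((b : ℝ) - (a : ℝ)))) := by
      rw [← Real.exp_nat_mul, ← Real.exp_nat_mul]
      have hmm : Real.exp (t * c) * Real.exp ((a : ℝ) * t) * Real.exp ((b : ℝ) * -t) =
          Real.exp (t * (c - ((b : ℝ) - (a : ℝ)))) := by
        rw [← Real.exp_add, ← Real.exp_add]
        ring_nf
      rw [← hmm]
      ring
    rw [hre]
    split_ifs with h
    · nth_rewrite 1 [show binP k p a * binP (n - k) p b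
        = (binP k p a * binP (n - k) p b) * 1 by ring]
      refine mul_le_mul_of_nonneg_left ?_ hBB
      exact Real.one_le_exp (mul_nonneg ht (by linarith))
    · exact mul_nonneg hBB (Real.exp_pos _).le
  calc pZ n k p (fun z => z ≤ c)
      ≤ ∑ a ∈ Finset.range (k + 1), ∑ b ∈ Finset.range (n - k + 1),
          Real.exp (t * c) *
            ((binP k p a * Real.exp t ^ a) * (binP (n - k) p b * Real.exp (-t) ^ b)) := by
        unfold pZ
        exact Finset.sum_le_sum fun a _ => Finset.sum_le_sum fun b _ => hterm a b
    _ = Real.exp (t * c) *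
        ((p * Real.exp t + (1 - p)) ^ k * (p * Real.exp (-t) + (1 - p)) ^ (n - k)) := by
        rw [← sum_binP_mul k p (Real.exp t), ← sum_binP_mul (n - k) p (Real.exp (-t))]
        rw [Finset.sum_mul_sum]
        rw [Finset.mul_sum]
        refine Finset.sum_congr rfl fun a _ => ?_
        rw [Finset.mul_sum]

set_option maxHeartbeats 1000000 in
/-- **Bernstein-type tail bounds for the fitness-distance change.**
Let `0 ≤ k ≤ n`, `0 < r ≤ n/2` and `p = r/n`. Let `X ~ Bin(k,p)`, `Y ~ Bin(n−k,p)`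
be independent and `Z = Y − X`, so `E(Z) = (n−2k)r/n`. Then for all `Δ > 0`,
`Pr(Z ≤ (n−2k)r/n − Δ)` and `Pr(Z ≥ (n−2k)r/n + Δ)` are both at most
`exp(−Δ²/(2(1−p)(r + Δ/3)))`. -/
theorem bernstein_fitness_change (n k : ℕ) (hk : k ≤ n) (r : ℝ) (hr0 : 0 < r)
    (hr : r ≤ (n : ℝ) / 2) (Δ : ℝ) (hΔ : 0 < Δ) :
    pZ n k (r / n) (fun z => z ≤ ((n : ℝ) - 2 * k) * r / n - Δ) ≤
        Real.exp (-(Δ ^ 2 / (2 * (1 - r / n) * (r + Δ / 3)))) ∧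
      pZ n k (r / n) (fun z => ((n : ℝ) - 2 * k) * r / n + Δ ≤ z) ≤
        Real.exp (-(Δ ^ 2 / (2 * (1 - r / n) * (r + Δ / 3)))) := by
  have hn : (0 : ℝ) < n := by
    rcases Nat.eq_zero_or_pos n with h | h
    · rw [h] at hr; norm_num at hr; linarith
    · exact_mod_cast h
  have hp0 : 0 < r / n := div_pos hr0 hn
  have hp2 : r / n ≤ 1 / 2 := by
    rw [div_le_div_iff₀ hn (by norm_num)]
    linarith
  have hq : 0 < 1 - r / n := by linarith
  have hs : 0 < r + Δ / 3 := by linarith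
  set t : ℝ := Δ / ((1 - r / n) * (r + Δ / 3)) with htdef
  have ht : 0 < t := div_pos hΔ (mul_pos hq hs)
  set x : ℝ := Δ / (r + Δ / 3) with hxdef
  have hx0 : 0 < x := div_pos hΔ hs
  have hx3 : x < 3 := by
    rw [hxdef, div_lt_iff₀ hs]
    linarith
  have hnr : (0:ℝ) < (n : ℝ) - r := by linarith
  have hxq : t * (1 - r / n) = x := by
    rw [htdef, hxdef]
    rw [div_mul_eq_mul_div, div_eq_div_iff (mul_pos hq hs).ne' hs.ne']
    ring
  set E : ℝ := (r / n) / (1 - r / n) * (Real.exp (t * (1 - r / n)) - 1 - t * (1 - r / n))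
    with hEdef
  have hE0 : 0 ≤ E := by
    have h1 := Real.add_one_le_exp (t * (1 - r / n))
    have : 0 ≤ Real.exp (t * (1 - r / n)) - 1 - t * (1 - r / n) := by linarith
    exact mul_nonneg (div_nonneg hp0.le hq.le) this
  have h1E : 1 + E ≤ Real.exp E := by
    have := Real.add_one_le_exp E
    linarith
  -- factor bounds in exponential form
  have hup : r / n * Real.exp t + (1 - r / n) ≤ Real.exp (t * (r / n) + E) := by
    have h := le_trans (factor_up hp0.le hp2 ht.le) h1E
    have h2 := mul_le_mul_of_nonneg_left h (Real.exp_pos (t * (r / n))).le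
    have e1 : Real.exp (t * (r / n)) * Real.exp (-(t * (r / n))) = 1 := by
      rw [← Real.exp_add]; simp
    have e2 : Real.exp (t * (r / n)) * Real.exp (t * (1 - r / n)) = Real.exp t := by
      rw [← Real.exp_add]; ring_nf
    calc r / n * Real.exp t + (1 - r / n)
        = Real.exp (t * (r / n)) *
            ((1 - r / n) * Real.exp (-(t * (r / n))) + r / n * Real.exp (t * (1 - r / n))) := by
          linear_combination (-(1 - r / n)) * e1 + (-(r / n)) * e2
      _ ≤ Real.exp (t * (r / n)) * Real.exp E := h2
      _ = Real.exp (t * (r / n) + E) := (Real.exp_add _ _).symm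
  have hdown : r / n * Real.exp (-t) + (1 - r / n) ≤ Real.exp (-(t * (r / n)) + E) := by
    have h := le_trans (factor_down hp0.le hp2 ht.le) h1E
    have h2 := mul_le_mul_of_nonneg_left h (Real.exp_pos (-(t * (r / n)))).le
    have e1 : Real.exp (-(t * (r / n))) * Real.exp (t * (r / n)) = 1 := by
      rw [← Real.exp_add]; simp
    have e2 : Real.exp (-(t * (r / n))) * Real.exp (-(t * (1 - r / n))) = Real.exp (-t) := by
      rw [← Real.exp_add]; ring_nf
    calc r / n * Real.exp (-t) + (1 - r / n)
        = Real.exp (-(t * (r / n))) *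
            ((1 - r / n) * Real.exp (t * (r / n)) + r / n * Real.exp (-(t * (1 - r / n)))) := by
          linear_combination (-(1 - r / n)) * e1 + (-(r / n)) * e2
      _ ≤ Real.exp (-(t * (r / n))) * Real.exp E := h2
      _ = Real.exp (-(t * (r / n)) + E) := (Real.exp_add _ _).symm
  -- the exponent bound
  have hnE : (n : ℝ) * E = r / (1 - r / n) * (Real.exp x - 1 - x) := by
    rw [hEdef, hxq]
    field_simp
  have h3x : 0 < 3 - x := by linarith
  have hW : Real.exp x - 1 - x ≤ 3 * x ^ 2 / (2 * (3 - x)) := by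
    rw [le_div_iff₀ (by positivity)]
    nlinarith [exp_quad_bound hx0.le]
  have hfinal : -(t * Δ) + (n : ℝ) * E ≤ -(Δ ^ 2 / (2 * (1 - r / n) * (r + Δ / 3))) := by
    rw [hnE]
    have step : r / (1 - r / n) * (Real.exp x - 1 - x)
        ≤ r / (1 - r / n) * (3 * x ^ 2 / (2 * (3 - x))) :=
      mul_le_mul_of_nonneg_left hW (by positivity)
    have eq2 : -(t * Δ) + r / (1 - r / n) * (3 * x ^ 2 / (2 * (3 - x)))
        = -(Δ ^ 2 / (2 * (1 - r / n) * (r + Δ / 3))) := by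
      rw [htdef, hxdef]
      have h1 : 3 - Δ / (r + Δ / 3) = 3 * r / (r + Δ / 3) := by
        field_simp
        ring
      rw [h1]
      field_simp [hq.ne', hs.ne', hr0.ne']
      ring
    linarith
  have hbase1 : 0 ≤ r / n * Real.exp (-t) + (1 - r / n) :=
    add_nonneg (mul_nonneg hp0.le (Real.exp_pos _).le) hq.le
  have hbase2 : 0 ≤ r / n * Real.exp t + (1 - r / n) :=
    add_nonneg (mul_nonneg hp0.le (Real.exp_pos _).le) hq.le
  constructor
  · -- lower tail
    have hM := pZ_le_le n k (r / n) t (((n : ℝ) - 2 * k) * r / n - Δ) hp0.le (by linarith) ht.le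
    refine hM.trans ?_
    have hpow1 : (r / n * Real.exp t + (1 - r / n)) ^ k
        ≤ Real.exp (t * (r / n) + E) ^ k := pow_le_pow_left₀ hbase2 hup k
    have hpow2 : (r / n * Real.exp (-t) + (1 - r / n)) ^ (n - k)
        ≤ Real.exp (-(t * (r / n)) + E) ^ (n - k) := pow_le_pow_left₀ hbase1 hdown (n - k)
    have hmul : Real.exp (t * (((n : ℝ) - 2 * k) * r / n - Δ)) *
        ((r / n * Real.exp t + (1 - r / n)) ^ k * (r / n * Real.exp (-t) + (1 - r / n)) ^ (n - k))
        ≤ Real.exp (t * (((n : ℝ) - 2 * k) * r / n - Δ)) *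
          (Real.exp (t * (r / n) + E) ^ k * Real.exp (-(t * (r / n)) + E) ^ (n - k)) := by
      refine mul_le_mul_of_nonneg_left ?_ (Real.exp_pos _).le
      exact mul_le_mul hpow1 hpow2 (pow_nonneg hbase1 _) (pow_nonneg (Real.exp_pos _).le _)
    refine hmul.trans ?_
    have hcollapse : Real.exp (t * (((n : ℝ) - 2 * k) * r / n - Δ)) *
        (Real.exp (t * (r / n) + E) ^ k * Real.exp (-(t * (r / n)) + E) ^ (n - k))
        = Real.exp (t * (((n : ℝ) - 2 * k) * r / n - Δ) +
            ((k : ℝ) * (t * (r / n) + E) + ((n : ℝ) - (k : ℝ)) * (-(t * (r / n)) + E))) := by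
      rw [← Real.exp_nat_mul, ← Real.exp_nat_mul, ← Real.exp_add, ← Real.exp_add]
      congr 2
      push_cast [Nat.cast_sub hk]
      ring
    rw [hcollapse]
    rw [Real.exp_le_exp]
    have hring : t * (((n : ℝ) - 2 * k) * r / n - Δ) +
        ((k : ℝ) * (t * (r / n) + E) + ((n : ℝ) - (k : ℝ)) * (-(t * (r / n)) + E))
        = -(t * Δ) + (n : ℝ) * E := by
      have hcn : ((n : ℝ) - 2 * k) * r / n = ((n : ℝ) - 2 * k) * (r / n) := by ring
      rw [hcn]
      ring
    rw [hring]
    exact hfinal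
  · -- upper tail
    have hM := pZ_ge_le n k (r / n) t (((n : ℝ) - 2 * k) * r / n + Δ) hp0.le (by linarith) ht.le
    refine hM.trans ?_
    have hpow1 : (r / n * Real.exp (-t) + (1 - r / n)) ^ k
        ≤ Real.exp (-(t * (r / n)) + E) ^ k := pow_le_pow_left₀ hbase1 hdown k
    have hpow2 : (r / n * Real.exp t + (1 - r / n)) ^ (n - k)
        ≤ Real.exp (t * (r / n) + E) ^ (n - k) := pow_le_pow_left₀ hbase2 hup (n - k)
    have hmul : Real.exp (-(t * (((n : ℝ) - 2 * k) * r / n + Δ))) *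
        ((r / n * Real.exp (-t) + (1 - r / n)) ^ k * (r / n * Real.exp t + (1 - r / n)) ^ (n - k))
        ≤ Real.exp (-(t * (((n : ℝ) - 2 * k) * r / n + Δ))) *
          (Real.exp (-(t * (r / n)) + E) ^ k * Real.exp (t * (r / n) + E) ^ (n - k)) := by
      refine mul_le_mul_of_nonneg_left ?_ (Real.exp_pos _).le
      exact mul_le_mul hpow1 hpow2 (pow_nonneg hbase2 _) (pow_nonneg (Real.exp_pos _).le _)
    refine hmul.trans ?_
    have hcollapse : Real.exp (-(t * (((n : ℝ) - 2 * k) * r / n + Δ))) *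
        (Real.exp (-(t * (r / n)) + E) ^ k * Real.exp (t * (r / n) + E) ^ (n - k))
        = Real.exp (-(t * (((n : ℝ) - 2 * k) * r / n + Δ)) +
            ((k : ℝ) * (-(t * (r / n)) + E) + ((n : ℝ) - (k : ℝ)) * (t * (r / n) + E))) := by
      rw [← Real.exp_nat_mul, ← Real.exp_nat_mul, ← Real.exp_add, ← Real.exp_add]
      congr 2
      push_cast [Nat.cast_sub hk]
      ring
    rw [hcollapse]
    rw [Real.exp_le_exp]
    have hring : -(t * (((n : ℝ) - 2 * k) * r / n + Δ)) +
        ((k : ℝ) * (-(t * (r / n)) + E) + ((n : ℝ) - (k : ℝ)) * (t * (r / n) + E))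
        = -(t * Δ) + (n : ℝ) * E := by
      have hcn : ((n : ℝ) - 2 * k) * r / n = ((n : ℝ) - 2 * k) * (r / n) := by ring
      rw [hcn]
      ring
    rw [hring]
    exact hfinal

end BinomialEstimates
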